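/- Let 𝒜 be a unital C*-algebra and φ : 𝒜 → ℂ a continuous ℂ-linear functional. Let k, N ∈ ℕ, Δ ∈ M_k(ℂ), Ξ ∈ M_{N×k}(ℂ), let P ∈ M_N(𝒜) be invertible, set r := Δ̃ + (Ξ*)˜ · P⁻¹ · Ξ̃ ∈ M_k(𝒜), and let B ∈ M_k(ℂ) be such that B̃ − r is invertible in M_k(𝒜). For ε > 0 define G_ε := [[(B−Δ)˜, −(Ξ*)˜], [−Ξ̃, (iε)•1 + P]] ∈ M_{(k+N)×(k+N)}(𝒜), where (iε)•1 is the scalar multiple of the identity of M_N(𝒜). Then G_ε is invertible for all sufficiently small ε > 0, and, as ε → 0 from the right, the upper-left k×k block of the matrix obtained by applying φ entrywise to G_ε⁻¹ converges (in M_k(ℂ)) to the k×k matrix obtained by applying φ entrywise to (B̃ − r)⁻¹. -/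

import Mathlib

open Matrix Filter Topology

section NCSchur
variable {m n α : Type*} [Fintype m] [Fintype n] [DecidableEq m] [DecidableEq n] [Ring α]

theorem myFromBlocks_eq_of_invertible₂₂ (A : Matrix m m α) (B : Matrix m n α) (C : Matrix n m α)
    (D : Matrix n n α) [Invertible D] :
    fromBlocks A B C D =
      fromBlocks 1 (B * ⅟ D) 0 1 * fromBlocks (A - B * ⅟ D * C) 0 0 D *
        fromBlocks 1 0 (⅟ D * C) 1 := by
  simp only [fromBlocks_multiply, Matrix.mul_zero, Matrix.zero_mul, add_zero, zero_add,
    Matrix.one_mul, Matrix.mul_one, invOf_mul_self, Matrix.invOf_mul_cancel_right,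
    Matrix.mul_invOf_cancel_left, Matrix.mul_assoc, sub_add_cancel]

def myFromBlocksZero₂₁Invertible (A : Matrix m m α) (B : Matrix m n α) (D : Matrix n n α)
    [Invertible A] [Invertible D] : Invertible (fromBlocks A B 0 D) where
  invOf := fromBlocks (⅟ A) (-(⅟ A * B * ⅟ D)) 0 (⅟ D)
  invOf_mul_self := by
    simp_rw [fromBlocks_multiply, Matrix.mul_zero, Matrix.zero_mul, zero_add, add_zero,
      Matrix.neg_mul, invOf_mul_self, Matrix.invOf_mul_cancel_right, add_neg_cancel,
      fromBlocks_one]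
  mul_invOf_self := by
    simp_rw [fromBlocks_multiply, Matrix.mul_zero, Matrix.zero_mul, zero_add, add_zero,
      Matrix.mul_neg, mul_invOf_self, Matrix.mul_assoc, Matrix.mul_invOf_cancel_left,
      neg_add_cancel, fromBlocks_one]

def myFromBlocksZero₁₂Invertible (A : Matrix m m α) (C : Matrix n m α) (D : Matrix n n α)
    [Invertible A] [Invertible D] : Invertible (fromBlocks A 0 C D) where
  invOf := fromBlocks (⅟ A) 0 (-(⅟ D * C * ⅟ A)) (⅟ D)
  invOf_mul_self := by
    simp_rw [fromBlocks_multiply, Matrix.mul_zero, Matrix.zero_mul, zero_add, add_zero,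
      Matrix.neg_mul, invOf_mul_self, Matrix.invOf_mul_cancel_right, neg_add_cancel,
      fromBlocks_one]
  mul_invOf_self := by
    simp_rw [fromBlocks_multiply, Matrix.mul_zero, Matrix.zero_mul, zero_add, add_zero,
      Matrix.mul_neg, mul_invOf_self, Matrix.mul_assoc, Matrix.mul_invOf_cancel_left,
      add_neg_cancel, fromBlocks_one]

def myFromBlocks₂₂Invertible (A : Matrix m m α) (B : Matrix m n α) (C : Matrix n m α)
    (D : Matrix n n α) [Invertible D] [Invertible (A - B * ⅟ D * C)] :
    Invertible (fromBlocks A B C D) := by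
  convert Invertible.copy' _ _ (fromBlocks (⅟ (A - B * ⅟ D * C)) (-(⅟ (A - B * ⅟ D * C) * B * ⅟ D))
    (-(⅟ D * C * ⅟ (A - B * ⅟ D * C))) (⅟ D + ⅟ D * C * ⅟ (A - B * ⅟ D * C) * B * ⅟ D))
      (myFromBlocks_eq_of_invertible₂₂ _ _ _ _) _
  · letI : Invertible (1 : Matrix n n α) := invertibleOne
    letI : Invertible (1 : Matrix m m α) := invertibleOne
    refine Invertible.mul ?_ (myFromBlocksZero₁₂Invertible _ _ _)
    exact
      Invertible.mul (myFromBlocksZero₂₁Invertible _ _ _)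
        (myFromBlocksZero₂₁Invertible _ _ _)
  · show
      _ =
        fromBlocks 1 0 (-(1 * (⅟ D * C) * 1)) 1 *
          (fromBlocks (⅟ (A - B * ⅟ D * C)) (-(⅟ (A - B * ⅟ D * C) * 0 * ⅟ D)) 0 (⅟ D) *
            fromBlocks 1 (-(1 * (B * ⅟ D) * 1)) 0 1)
    simp only [fromBlocks_multiply, invOf_one, Matrix.one_mul, Matrix.mul_one, Matrix.zero_mul,
      Matrix.mul_zero, add_zero, zero_add, neg_zero, Matrix.mul_neg, Matrix.neg_mul, neg_neg, ←
      Matrix.mul_assoc, add_comm (⅟D)]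

theorem myInvOf_fromBlocks₂₂_eq (A : Matrix m m α) (B : Matrix m n α) (C : Matrix n m α)
    (D : Matrix n n α) [Invertible D] [Invertible (A - B * ⅟ D * C)]
    [Invertible (fromBlocks A B C D)] :
    ⅟ (fromBlocks A B C D) =
      fromBlocks (⅟ (A - B * ⅟ D * C)) (-(⅟ (A - B * ⅟ D * C) * B * ⅟ D))
        (-(⅟ D * C * ⅟ (A - B * ⅟ D * C))) (⅟ D + ⅟ D * C * ⅟ (A - B * ⅟ D * C) * B * ⅟ D) := by
  letI := myFromBlocks₂₂Invertible A B C D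
  convert (rfl : ⅟ (fromBlocks A B C D) = _)
  exact (invOf_eq_right_inv (mul_invOf_self' (fromBlocks A B C D))).symm.trans rfl

end NCSchur

/-- Part (ii) of the main representation theorem: the entrywise expectation of the upper-left
block of `G_ε⁻¹` converges, as `ε → 0⁺`, to the entrywise expectation of `(B̃ − r)⁻¹`. -/
theorem stmt_3 (𝒜 : Type*) [NormedRing 𝒜] [StarRing 𝒜] [CStarRing 𝒜]
    [NormedAlgebra ℂ 𝒜] [CompleteSpace 𝒜] [StarModule ℂ 𝒜]
    (φ : 𝒜 →L[ℂ] ℂ) (k N : ℕ)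
    (Δ : Matrix (Fin k) (Fin k) ℂ) (Ξ : Matrix (Fin N) (Fin k) ℂ)
    (P : Matrix (Fin N) (Fin N) 𝒜) [Invertible P]
    (B : Matrix (Fin k) (Fin k) ℂ)
    (r : Matrix (Fin k) (Fin k) 𝒜)
    (hr : r = Δ.map ⇑(algebraMap ℂ 𝒜) +
        (Ξᴴ).map ⇑(algebraMap ℂ 𝒜) * ⅟P * Ξ.map ⇑(algebraMap ℂ 𝒜))
    (hB : IsUnit (B.map ⇑(algebraMap ℂ 𝒜) - r))
    (G : ℝ → Matrix (Fin k ⊕ Fin N) (Fin k ⊕ Fin N) 𝒜)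
    (hG : ∀ ε : ℝ, G ε = Matrix.fromBlocks ((B - Δ).map ⇑(algebraMap ℂ 𝒜))
        (-((Ξᴴ).map ⇑(algebraMap ℂ 𝒜))) (-(Ξ.map ⇑(algebraMap ℂ 𝒜)))
        ((Complex.I * (ε : ℂ)) • (1 : Matrix (Fin N) (Fin N) 𝒜) + P)) :
    (∀ᶠ ε : ℝ in 𝓝[>] 0, IsUnit (G ε)) ∧
      Tendsto (fun ε : ℝ => ((Ring.inverse (G ε)).map ⇑φ).toBlocks₁₁) (𝓝[>] 0)
        (𝓝 ((Ring.inverse (B.map ⇑(algebraMap ℂ 𝒜) - r)).map ⇑φ)) := by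
  classical
  set f : ℂ → 𝒜 := ⇑(algebraMap ℂ 𝒜) with hf
  set A' : Matrix (Fin k) (Fin k) 𝒜 := (B - Δ).map f with hA'
  set Bm : Matrix (Fin k) (Fin N) 𝒜 := -((Ξᴴ).map f) with hBm
  set Cm : Matrix (Fin N) (Fin k) 𝒜 := -(Ξ.map f) with hCm
  -- the Schur complement of the limiting pencil equals `B̃ - r`
  have hSchur : A' - Bm * ⅟P * Cm = B.map f - r := by
    rw [hr, hA', hBm, hCm, Matrix.map_sub f (fun a b => map_sub (algebraMap ℂ 𝒜) a b)]
    simp only [Matrix.neg_mul, Matrix.mul_neg, neg_neg]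
    rw [sub_sub]
  haveI hSinv : Invertible (B.map f - r) := hB.invertible
  haveI hS' : Invertible (A' - Bm * ⅟P * Cm) := by rw [hSchur]; exact hSinv
  have hG0 : G 0 = fromBlocks A' Bm Cm P := by
    rw [hG]; simp
  haveI hGinv : Invertible (G 0) := by rw [hG0]; exact myFromBlocks₂₂Invertible _ _ _ _
  -- continuity of the pencil in ε
  have hGt : Tendsto G (𝓝[>] (0 : ℝ)) (𝓝 (G 0)) := by
    have hc : Continuous G := by
      have hGfun : G = fun ε : ℝ => fromBlocks A' Bm Cm
          ((Complex.I * (ε : ℂ)) • (1 : Matrix (Fin N) (Fin N) 𝒜) + P) := funext hG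
      rw [hGfun]
      apply continuous_matrix
      rintro (i | i) (j | j)
      · simpa only [fromBlocks_apply₁₁] using continuous_const
      · simpa only [fromBlocks_apply₁₂] using continuous_const
      · simpa only [fromBlocks_apply₂₁] using continuous_const
      · simp only [fromBlocks_apply₂₂, Matrix.add_apply, Matrix.smul_apply]
        exact ((continuous_const.mul Complex.continuous_ofReal).smul continuous_const).add
          continuous_const
    exact (hc.tendsto 0).mono_left nhdsWithin_le_nhds
  -- normed ring structure on the matrix algebra
  letI mn : NormedRing (Matrix (Fin k ⊕ Fin N) (Fin k ⊕ Fin N) 𝒜) := Matrix.linftyOpNormedRing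
  haveI mc : CompleteSpace (Matrix (Fin k ⊕ Fin N) (Fin k ⊕ Fin N) 𝒜) :=
    inferInstanceAs (CompleteSpace ((Fin k ⊕ Fin N) → (Fin k ⊕ Fin N) → 𝒜))
  haveI : HasSummableGeomSeries (Matrix (Fin k ⊕ Fin N) (Fin k ⊕ Fin N) 𝒜) :=
    @instHasSummableGeomSeriesOfCompleteSpace _ mn mc
  have hGu : IsUnit (G 0) := isUnit_of_invertible (G 0)
  have hunit : ∀ᶠ ε : ℝ in 𝓝[>] 0, IsUnit (G ε) :=
    hGt.eventually (Units.isOpen.mem_nhds hGu)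
  -- continuity of `Ring.inverse` at `G 0`
  have hinv : Tendsto (fun ε : ℝ => Ring.inverse (G ε)) (𝓝[>] (0 : ℝ))
      (𝓝 (Ring.inverse (G 0))) := by
    have h1 : ContinuousAt Ring.inverse (G 0) := by
      have := NormedRing.inverse_continuousAt hGu.unit
      rwa [IsUnit.unit_spec] at this
    exact h1.tendsto.comp hGt
  -- continuity of the post-processing map
  have hψ : Continuous (fun M : Matrix (Fin k ⊕ Fin N) (Fin k ⊕ Fin N) 𝒜 =>
      ((M.map ⇑φ).toBlocks₁₁ : Matrix (Fin k) (Fin k) ℂ)) := by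
    apply continuous_matrix
    intro i j
    exact φ.continuous.comp ((continuous_apply _).comp (continuous_apply _))
  -- identify the limit
  have key : ((Ring.inverse (G 0)).map ⇑φ).toBlocks₁₁ = (Ring.inverse (B.map f - r)).map ⇑φ := by
    letI := myFromBlocks₂₂Invertible A' Bm Cm P
    calc ((Ring.inverse (G 0)).map ⇑φ).toBlocks₁₁
        = ((Ring.inverse (fromBlocks A' Bm Cm P)).map ⇑φ).toBlocks₁₁ := by rw [hG0]
      _ = ((⅟(fromBlocks A' Bm Cm P)).map ⇑φ).toBlocks₁₁ := by rw [Ring.inverse_invertible]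
      _ = (((fromBlocks (⅟ (A' - Bm * ⅟P * Cm)) (-(⅟ (A' - Bm * ⅟P * Cm) * Bm * ⅟P))
            (-(⅟P * Cm * ⅟ (A' - Bm * ⅟P * Cm)))
            (⅟P + ⅟P * Cm * ⅟ (A' - Bm * ⅟P * Cm) * Bm * ⅟P))).map ⇑φ).toBlocks₁₁ := by
          rw [myInvOf_fromBlocks₂₂_eq]
      _ = (⅟ (A' - Bm * ⅟P * Cm)).map ⇑φ := by
          rw [Matrix.fromBlocks_map, Matrix.toBlocks_fromBlocks₁₁]
      _ = (Ring.inverse (A' - Bm * ⅟P * Cm)).map ⇑φ := by rw [Ring.inverse_invertible]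
      _ = (Ring.inverse (B.map f - r)).map ⇑φ := by rw [hSchur]
  refine ⟨hunit, ?_⟩
  have := (hψ.tendsto (Ring.inverse (G 0))).comp hinv
  rwa [key] at this
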